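/- Let V satisfy the basic assumptions. For any real k ≥ 1 and every y ∈ (−k, +∞), the first-order Taylor remainder φ_k(y) := V(k+y) − V(k) − V'(k)y satisfies φ_k(y) ≥ Φ_k(y), where Φ_k(y) := (1/2)λ(k+1)y² for y ∈ (−k, 1] and Φ_k(y) := λ(k+1)(y − 1/2) for y ∈ [1, +∞), and λ(x) := inf_{(0,x)} V''. -/

import Mathlib

open Filter Set MeasureTheory
open scoped Classical ENNReal NNReal BigOperators

noncomputable section

/-- `lam V x` is λ(x) := inf_{(0,x)} V''. -/
def lam (V : ℝ → ℝ) (x : ℝ) : ℝ :=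
  sInf (deriv (deriv V) '' Set.Ioo 0 x)

/-- The basic assumptions (Reg), (Sing), (Cvx), (Dec) on the interaction
potential `V`, with decay exponent `a`. -/
structure BasicAssumptions (V : ℝ → ℝ) (a : ℝ) : Prop where
  nonneg : ∀ x : ℝ, 0 ≤ V x
  even : ∀ x : ℝ, V (-x) = V x
  pos : ∀ x : ℝ, x ≠ 0 → 0 < V x
  smooth : ContDiffOn ℝ 2 V {(0 : ℝ)}ᶜ
  sing : Filter.Tendsto V (nhdsWithin 0 {(0 : ℝ)}ᶜ) Filter.atTop
  cvx : ∀ x : ℝ, 0 < x → 0 < lam V x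
  decV : Filter.Tendsto V Filter.atTop (nhds 0)
  decV' : Filter.Tendsto (deriv V) Filter.atTop (nhds 0)
  one_lt_a : 1 < a
  decV'' : ∀ δ : ℝ, 0 < δ → ∃ c : ℝ, 0 < c ∧
    ∀ x : ℝ, δ ≤ |x| → deriv (deriv V) x ≤ c * |x| ^ (-(a + 2))

/-- The configuration space 𝒟_n. -/
def Dn (n : ℕ) : Set (Fin (n + 1) → ℝ) :=
  {x | x 0 = 0 ∧ x (Fin.last n) = 1 ∧ Monotone x}

/-- The energy E_n(x) := (1/n) Σ_{k=1}^{n} Σ_{j=0}^{n−k} V(n[x(j+k) − x(j)]),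
valued in [0,∞], with the convention V(0) = +∞ from (Sing).  The double sum is
written as a sum over all pairs q < p. -/
def En (V : ℝ → ℝ) (n : ℕ) (x : Fin (n + 1) → ℝ) : ℝ≥0∞ :=
  ENNReal.ofReal (1 / (n : ℝ)) *
    ∑ p : Fin (n + 1), ∑ q : Fin (n + 1),
      if (q : ℕ) < (p : ℕ) then
        (if x p = x q then ⊤ else ENNReal.ofReal (V ((n : ℝ) * (x p - x q))))
      else 0

/-- The first-order Taylor remainder φ_k(y) := V(k+y) − V(k) − V'(k)y. -/
def phi (V : ℝ → ℝ) (k y : ℝ) : ℝ :=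
  V (k + y) - V k - deriv V k * y

/-- The lower-bound function Φ_k. -/
def PhiLB (V : ℝ → ℝ) (k y : ℝ) : ℝ :=
  if y ≤ 1 then 1 / 2 * lam V (k + 1) * y ^ 2 else lam V (k + 1) * (y - 1 / 2)

/-- σ^n(i) := Σ_{k=i+1}^{n−i} min(k−i, n−i+1−k)|V'(k)| for 1 ≤ i ≤ ⌊n/2⌋,
and 0 otherwise. -/
def sigman (V : ℝ → ℝ) (n i : ℕ) : ℝ :=
  if 1 ≤ i ∧ i ≤ n / 2 then
    ∑ k ∈ Finset.Icc (i + 1) (n - i),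
      ((min (k - i) (n + 1 - i - k) : ℕ) : ℝ) * |deriv V (k : ℝ)|
  else 0

/-- σ^∞(i) := Σ_{k=i+1}^∞ (k−i)|V'(k)| for i ≥ 1 (index 0 is inert). -/
def sigmaInf (V : ℝ → ℝ) (i : ℕ) : ℝ :=
  if i = 0 then 0
  else ∑' m : ℕ, ((m + 1 : ℕ) : ℝ) * |deriv V ((i + 1 + m : ℕ) : ℝ)|

/-- Dom E_n^1 := {ε ∈ ℝ^n : −1 ≤ ε(i) ≤ n, Σ_{i=1}^n ε(i) = 0}, regarded as a
subset of ℓ²(ℕ) by extension by zero. -/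
def DomEn1 (n : ℕ) : Set (ℕ → ℝ) :=
  {ε | (∀ i, 1 ≤ i → i ≤ n → -1 ≤ ε i ∧ ε i ≤ (n : ℝ)) ∧
    (∀ i, i = 0 ∨ n < i → ε i = 0) ∧
    (∑ i ∈ Finset.Icc 1 n, ε i) = 0}

/-- The renormalised energy
E_n^1(ε) := Σ_{k=1}^{n} Σ_{j=0}^{n−k} [V(k + Σ_{l=j+1}^{j+k} ε(l)) − V(k)]. -/
def En1 (V : ℝ → ℝ) (n : ℕ) (ε : ℕ → ℝ) : ℝ :=
  ∑ k ∈ Finset.Icc 1 n, ∑ j ∈ Finset.range (n - k + 1),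
    (V ((k : ℝ) + ∑ l ∈ Finset.Icc (j + 1) (j + k), ε l) - V (k : ℝ))

/-- The quadratic-type part Q_n(ε) := Σ_{k=1}^{n} Σ_{j=0}^{n−k} φ_k(Σ_{l=j+1}^{k+j} ε(l)). -/
def Qn (V : ℝ → ℝ) (n : ℕ) (ε : ℕ → ℝ) : ℝ :=
  ∑ k ∈ Finset.Icc 1 n, ∑ j ∈ Finset.range (n - k + 1),
    phi V (k : ℝ) (∑ l ∈ Finset.Icc (j + 1) (j + k), ε l)

/-- The half truncation ε^{n,1/2}(i) := ε(i) for 1 ≤ i ≤ ⌈n/2⌉ and 0 otherwise. -/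
def half (n : ℕ) (ε : ℕ → ℝ) (i : ℕ) : ℝ :=
  if 1 ≤ i ∧ i ≤ (n + 1) / 2 then ε i else 0

/-- The reversal ε⃖(i) := ε(n+1−i) for 1 ≤ i ≤ n, extended by zero. -/
def rev (n : ℕ) (ε : ℕ → ℝ) (i : ℕ) : ℝ :=
  if 1 ≤ i ∧ i ≤ n then ε (n + 1 - i) else 0

/-- Dom E_∞^l := {ε ∈ ℓ²(ℕ) : ε(i) ≥ −1 for all i ≥ 1} (index 0 is inert). -/
def DomEinfl : Set (ℕ → ℝ) :=
  {ε | Summable (fun i => ε i ^ 2) ∧ ε 0 = 0 ∧ ∀ i, 1 ≤ i → -1 ≤ ε i}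

/-- Q_∞(ε) := Σ_{k=1}^∞ Σ_{j=0}^∞ φ_k(Σ_{l=j+1}^{k+j} ε(l)), valued in [0,∞]
(the summands are nonnegative). -/
def Qinf (V : ℝ → ℝ) (ε : ℕ → ℝ) : ℝ≥0∞ :=
  ∑' (k : ℕ) (j : ℕ),
    ENNReal.ofReal (phi V ((k : ℝ) + 1) (∑ l ∈ Finset.Icc (j + 1) (j + k + 1), ε l))

/-- The linear term (σ^∞, ε)_{ℓ²(ℕ)} as an extended real (difference of the
sums of the positive and negative parts). -/
def linPart (V : ℝ → ℝ) (ε : ℕ → ℝ) : EReal :=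
  ((∑' i : ℕ, ENNReal.ofReal (sigmaInf V i * ε i) : ℝ≥0∞) : EReal) -
    ((∑' i : ℕ, ENNReal.ofReal (-(sigmaInf V i * ε i)) : ℝ≥0∞) : EReal)

/-- The limit boundary-layer energy E_∞^l(ε) := Q_∞(ε) + (σ^∞, ε), valued in
the extended reals. -/
def Einfl (V : ℝ → ℝ) (ε : ℕ → ℝ) : EReal :=
  (Qinf V ε : EReal) + linPart V ε

end


section helpers
variable {V : ℝ → ℝ} {a : ℝ}

lemma lam_le_aux (h : BasicAssumptions V a) {x t : ℝ} (hx : 0 < x)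
    (ht : t ∈ Set.Ioo 0 x) : lam V x ≤ deriv (deriv V) t := by
  have hbdd : BddBelow (deriv (deriv V) '' Set.Ioo 0 x) := by
    by_contra hb
    have h0 := h.cvx x hx
    rw [lam, Real.sInf_of_not_bddBelow hb] at h0
    exact lt_irrefl 0 h0
  exact csInf_le hbdd (Set.mem_image_of_mem _ ht)

lemma hasDerivV (h : BasicAssumptions V a) {x : ℝ} (hx : x ≠ 0) :
    HasDerivAt V (deriv V x) x := by
  have hs : IsOpen ({(0:ℝ)}ᶜ) := isOpen_compl_singleton
  have hc : ContDiffAt ℝ 2 V x := h.smooth.contDiffAt (hs.mem_nhds hx)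
  exact (hc.differentiableAt (by norm_num)).hasDerivAt

lemma hasDerivV' (h : BasicAssumptions V a) {x : ℝ} (hx : x ≠ 0) :
    HasDerivAt (deriv V) (deriv (deriv V) x) x := by
  have hs : IsOpen ({(0:ℝ)}ᶜ) := isOpen_compl_singleton
  have h2 : ContDiffOn ℝ (1+1) V {(0:ℝ)}ᶜ := by
    have := h.smooth
    norm_num at this ⊢
    exact this
  have hd : ContDiffOn ℝ 1 (deriv V) {(0:ℝ)}ᶜ :=
    ((contDiffOn_succ_iff_deriv_of_isOpen hs).mp h2).2.2
  exact ((hd.contDiffAt (hs.mem_nhds hx)).differentiableAt one_ne_zero).hasDerivAt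

lemma deriv2_pos (h : BasicAssumptions V a) {u : ℝ} (hu : 0 < u) :
    0 < deriv (deriv V) u :=
  lt_of_lt_of_le (h.cvx (u+1) (by linarith))
    (lam_le_aux h (by linarith) ⟨hu, by linarith⟩)

end helpers

/-- quadratic/linear lower bound φ_k(y) ≥ Φ_k(y) for k ≥ 1 and
y > −k. -/
theorem statement4 (V : ℝ → ℝ) (a : ℝ) (h : BasicAssumptions V a)
    (k : ℝ) (hk : 1 ≤ k) (y : ℝ) (hy : -k < y) :
    PhiLB V k y ≤ phi V k y := by
  have hk0 : (0:ℝ) < k := lt_of_lt_of_le one_pos hk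
  set L := lam V (k + 1) with hLdef
  have hL : 0 < L := h.cvx (k+1) (by linarith)
  have hlam : ∀ t : ℝ, 0 < t → t < k + 1 → L ≤ deriv (deriv V) t :=
    fun t h1 h2 => lam_le_aux h (by linarith) ⟨h1, h2⟩
  -- G(t) = V'(k+t) - V'(k) - L t
  set G : ℝ → ℝ := fun t => deriv V (k + t) - deriv V k - L * t with hGdef
  have hderivkt : ∀ t : ℝ, 0 < k + t →
      HasDerivAt (fun s : ℝ => V (k + s)) (deriv V (k + t)) t := by
    intro t ht
    have h1 : HasDerivAt (fun s : ℝ => k + s) 1 t := (hasDerivAt_id t).const_add k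
    simpa [Function.comp_def] using (hasDerivV h (ne_of_gt ht)).comp t h1
  have hderivkt' : ∀ t : ℝ, 0 < k + t →
      HasDerivAt (fun s : ℝ => deriv V (k + s)) (deriv (deriv V) (k + t)) t := by
    intro t ht
    have h1 : HasDerivAt (fun s : ℝ => k + s) 1 t := (hasDerivAt_id t).const_add k
    simpa [Function.comp_def] using (hasDerivV' h (ne_of_gt ht)).comp t h1
  have hGd : ∀ t : ℝ, 0 < k + t → HasDerivAt G (deriv (deriv V) (k + t) - L) t := by
    intro t ht
    have h4 := ((hderivkt' t ht).sub_const (deriv V k)).sub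
      ((hasDerivAt_id t).const_mul L)
    exact h4.congr_deriv (by ring)
  have hG0 : G 0 = 0 := by simp [hGdef]
  have hGmono : ∀ c d : ℝ, 0 < k + c → d ≤ 1 → MonotoneOn G (Set.Icc c d) := by
    intro c d hc hd
    apply monotoneOn_of_deriv_nonneg (convex_Icc c d)
    · intro t ht
      exact ((hGd t (by have := ht.1; linarith)).continuousAt).continuousWithinAt
    · intro t ht
      rw [interior_Icc] at ht
      exact ((hGd t (by have := ht.1; linarith)).differentiableAt).differentiableWithinAt
    · intro t ht
      rw [interior_Icc] at ht
      rw [(hGd t (by have := ht.1; linarith)).deriv]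
      have := hlam (k + t) (by have := ht.1; linarith) (by have := ht.2; linarith)
      linarith
  -- F(t) = φ_k(t) - L/2 t²
  set F : ℝ → ℝ := fun t => V (k + t) - V k - deriv V k * t - L / 2 * t ^ 2 with hFdef
  have hFd : ∀ t : ℝ, 0 < k + t → HasDerivAt F (G t) t := by
    intro t ht
    have h4 := (((hderivkt t ht).sub_const (V k)).sub
      ((hasDerivAt_id t).const_mul (deriv V k))).sub
      ((hasDerivAt_pow 2 t).const_mul (L / 2))
    exact h4.congr_deriv (by simp only [hGdef]; norm_num; ring)
  have hF0 : F 0 = 0 := by simp [hFdef]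
  have hF : ∀ z : ℝ, -k < z → z ≤ 1 → 0 ≤ F z := by
    intro z hz1 hz2
    rcases le_or_gt 0 z with hz | hz
    · -- F monotone on [0, z]
      have hmono : MonotoneOn F (Set.Icc 0 z) := by
        apply monotoneOn_of_deriv_nonneg (convex_Icc 0 z)
        · intro t ht
          exact ((hFd t (by have := ht.1; linarith)).continuousAt).continuousWithinAt
        · intro t ht
          rw [interior_Icc] at ht
          exact ((hFd t (by have := ht.1; linarith)).differentiableAt).differentiableWithinAt
        · intro t ht
          rw [interior_Icc] at ht
          rw [(hFd t (by have := ht.1; linarith)).deriv]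
          have := hGmono 0 z (by linarith) (by linarith)
            (Set.mem_Icc.mpr ⟨le_rfl, hz⟩)
            (Set.mem_Icc.mpr ⟨le_of_lt ht.1, le_of_lt ht.2⟩) (le_of_lt ht.1)
          rw [hG0] at this
          exact this
      have := hmono (Set.mem_Icc.mpr ⟨le_rfl, hz⟩)
        (Set.mem_Icc.mpr ⟨hz, le_rfl⟩) hz
      rw [hF0] at this
      exact this
    · -- F antitone on [z, 0]
      have hmono : AntitoneOn F (Set.Icc z 0) := by
        apply antitoneOn_of_deriv_nonpos (convex_Icc z 0)
        · intro t ht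
          exact ((hFd t (by have := ht.1; linarith)).continuousAt).continuousWithinAt
        · intro t ht
          rw [interior_Icc] at ht
          exact ((hFd t (by have := ht.1; linarith)).differentiableAt).differentiableWithinAt
        · intro t ht
          rw [interior_Icc] at ht
          rw [(hFd t (by have := ht.1; linarith)).deriv]
          have := hGmono z 0 (by linarith) (by linarith)
            (Set.mem_Icc.mpr ⟨le_of_lt ht.1, le_of_lt ht.2⟩)
            (Set.mem_Icc.mpr ⟨le_of_lt hz, le_rfl⟩) (le_of_lt ht.2)
          rw [hG0] at this
          exact this
      have := hmono (Set.mem_Icc.mpr ⟨le_rfl, le_of_lt hz⟩)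
        (Set.mem_Icc.mpr ⟨le_of_lt hz, le_rfl⟩) (le_of_lt hz)
      rw [hF0] at this
      exact this
  rw [PhiLB, phi]
  rcases le_or_gt y 1 with hy1 | hy1
  · rw [if_pos hy1]
    have := hF y hy hy1
    rw [hFdef] at this
    simp only at this
    linarith
  · rw [if_neg (not_le.mpr hy1)]
    -- φ(1) ≥ L/2
    have hF1 : 0 ≤ F 1 := hF 1 (by linarith) le_rfl
    have hF1' : L / 2 ≤ V (k + 1) - V k - deriv V k := by
      rw [hFdef] at hF1
      simp only at hF1
      nlinarith
    -- V' monotone on [k+1, k+y]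
    have hVmono : MonotoneOn (deriv V) (Set.Icc (k+1) (k+y)) := by
      apply monotoneOn_of_deriv_nonneg (convex_Icc _ _)
      · intro t ht
        exact (hasDerivV' h (show t ≠ 0 by have := ht.1; intro h0; rw [h0] at this; linarith)).continuousAt.continuousWithinAt
      · intro t ht
        rw [interior_Icc] at ht
        exact (hasDerivV' h (show t ≠ 0 by have := ht.1; intro h0; rw [h0] at this; linarith)).differentiableAt.differentiableWithinAt
      · intro t ht
        rw [interior_Icc] at ht
        exact le_of_lt (deriv2_pos h (by have := ht.1; linarith))
    -- G 1 ≥ 0 : V'(k+1) - V'(k) ≥ L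
    have hG1 : 0 ≤ G 1 := by
      have := hGmono 0 1 (by linarith) le_rfl
        (Set.mem_Icc.mpr ⟨le_rfl, zero_le_one⟩)
        (Set.mem_Icc.mpr ⟨zero_le_one, le_rfl⟩) zero_le_one
      rw [hG0] at this; exact this
    -- H(t) = V(k+t) - V'(k) t - L t, monotone on [1, y]
    set H : ℝ → ℝ := fun t => V (k + t) - deriv V k * t - L * t with hHdef
    have hHd : ∀ t : ℝ, 0 < k + t →
        HasDerivAt H (deriv V (k + t) - deriv V k - L) t := by
      intro t ht
      have h4 := ((hderivkt t ht).sub ((hasDerivAt_id t).const_mul (deriv V k))).sub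
        ((hasDerivAt_id t).const_mul L)
      exact h4.congr_deriv (by ring)
    have hHmono : MonotoneOn H (Set.Icc 1 y) := by
      apply monotoneOn_of_deriv_nonneg (convex_Icc 1 y)
      · intro t ht
        exact ((hHd t (by have := ht.1; linarith)).continuousAt).continuousWithinAt
      · intro t ht
        rw [interior_Icc] at ht
        exact ((hHd t (by have := ht.1; linarith)).differentiableAt).differentiableWithinAt
      · intro t ht
        rw [interior_Icc] at ht
        rw [(hHd t (by have := ht.1; linarith)).deriv]
        have hm := hVmono (show k + 1 ∈ Set.Icc (k+1) (k+y) from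
            ⟨le_rfl, by linarith [ht.2]⟩)
          (show k + t ∈ Set.Icc (k+1) (k+y) from
            ⟨by linarith [ht.1], by linarith [ht.2]⟩)
          (by linarith [ht.1])
        have : deriv V (k + 1) - deriv V k - L * 1 ≤ deriv V (k + t) - deriv V k - L := by
          linarith
        calc (0:ℝ) ≤ G 1 := hG1
          _ ≤ _ := by rw [hGdef]; exact this
    have hHle : H 1 ≤ H y := hHmono (Set.mem_Icc.mpr ⟨le_rfl, le_of_lt hy1⟩)
      (Set.mem_Icc.mpr ⟨le_of_lt hy1, le_rfl⟩) (le_of_lt hy1)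
    rw [hHdef] at hHle
    simp only at hHle
    nlinarith
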